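/- arXiv:1203.5447 — 2 statements merged into one kernel-verified Lean document; each statement's English description precedes it below -/
import Mathlib

section
/- Let n ≥ 2 be an integer, let b be an algebraic integer, and let w be a periodic point of g_b of period h ≥ 1 with multiplier μ = ∏_{j=0}^{h-1} (g_b^{∘j}(w))^{n-1}. Then μⁿ − (−b)^{(n-1)h} lies in the ideal n·𝒪, where 𝒪 is the ring of all algebraic integers; that is, (μⁿ − (−b)^{(n-1)h})/n is an algebraic integer. -/
open Polynomial Finset

set_option synthInstance.maxHeartbeats 1000000
set_option maxHeartbeats 1000000

private lemma pow_mod_aux {R : Type*} [CommRing R] (a v N : R) (m : ℕ) :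
    ∃ u, (a + N * v) ^ m = a ^ m + N * u := by
  induction m with
  | zero => exact ⟨0, by ring⟩
  | succ m ih =>
    obtain ⟨u, hu⟩ := ih
    exact ⟨u * (a + N * v) + a ^ m * v, by rw [pow_succ, hu]; ring⟩

private lemma prod_mod_aux {R : Type*} [CommRing R] (N c : R) (h : ℕ) (x : ℕ → R)
    (hx : ∀ j < h, ∃ u, x j = c + N * u) :
    ∃ t, ∏ j ∈ Finset.range h, x j = c ^ h + N * t := by
  induction h with
  | zero => exact ⟨0, by simp⟩
  | succ h ih =>
    obtain ⟨t, ht⟩ := ih (fun j hj => hx j (hj.trans (Nat.lt_succ_self h)))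
    obtain ⟨u, hu⟩ := hx h (Nat.lt_succ_self h)
    refine ⟨t * (c + N * u) + c ^ h * u, ?_⟩
    rw [Finset.prod_range_succ, ht, hu]; ring

/-- exponent sequence -/
private def iterM (n : ℕ) : ℕ → ℕ
  | 0 => 0
  | k + 1 => n * iterM n k + 1

/-- iterated numerator polynomial -/
private noncomputable def iterQ {R : Type*} [CommRing R] (n : ℕ) (B : R) : ℕ → Polynomial R
  | 0 => X
  | k + 1 => (iterQ n B k) ^ n + C ((n : R) ^ (n * iterM n k) * B)

private lemma iterQ_monic {R : Type*} [CommRing R] [Nontrivial R] (n : ℕ) (hn : 1 ≤ n) (B : R) :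
    ∀ k, (iterQ n B k).Monic ∧ (iterQ n B k).natDegree = n ^ k := by
  intro k
  induction k with
  | zero => exact ⟨monic_X, natDegree_X⟩
  | succ k ih =>
    obtain ⟨hm, hd⟩ := ih
    have hmp : ((iterQ n B k) ^ n).Monic := hm.pow n
    have hdp : ((iterQ n B k) ^ n).natDegree = n ^ (k + 1) := by
      rw [hm.natDegree_pow, hd, ← pow_succ']
    have hlt : (C ((n : R) ^ (n * iterM n k) * B)).degree < ((iterQ n B k) ^ n).degree := by
      refine lt_of_le_of_lt degree_C_le ?_
      rw [degree_eq_natDegree hmp.ne_zero, hdp]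
      exact_mod_cast Nat.pos_of_ne_zero (pow_ne_zero _ (by omega))
    refine ⟨hmp.add_of_left hlt, ?_⟩
    show ((iterQ n B k) ^ n + C _).natDegree = _
    rw [natDegree_eq_of_degree_eq (degree_add_eq_left_of_degree_lt hlt), hdp]

private lemma aeval_iterQ (n : ℕ) (hn : 2 ≤ n) (b : ℂ) (hb : IsIntegral ℤ b) (z : ℂ) :
    ∀ k, (Polynomial.aeval z (iterQ n (⟨b, hb⟩ : integralClosure ℤ ℂ) k) : ℂ)
      = (n : ℂ) ^ (iterM n k) * (fun z : ℂ => (z ^ n + b) / n)^[k] z := by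
  have hn0 : (n : ℂ) ≠ 0 := Nat.cast_ne_zero.2 (by omega)
  intro k
  induction k with
  | zero => simp [iterQ, iterM]
  | succ k ih =>
    rw [iterQ, map_add, map_pow, ih, aeval_C]
    have hmap : (algebraMap (integralClosure ℤ ℂ) ℂ)
        ((n : integralClosure ℤ ℂ) ^ (n * iterM n k) * (⟨b, hb⟩ : integralClosure ℤ ℂ))
        = (n : ℂ) ^ (n * iterM n k) * b := by
      push_cast [Subalgebra.algebraMap_eq]; rfl
    rw [hmap, Function.iterate_succ_apply']
    show _ = (n:ℂ) ^ (iterM n (k+1)) * ((((fun z : ℂ => (z ^ n + b) / n)^[k] z) ^ n + b) / n)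
    rw [iterM]
    field_simp
    ring

private lemma periodic_isIntegral (n : ℕ) (hn : 2 ≤ n) (b : ℂ) (hb : IsIntegral ℤ b)
    (h : ℕ) (hh : 1 ≤ h) (z : ℂ)
    (hz : (fun z : ℂ => (z ^ n + b) / n)^[h] z = z) : IsIntegral ℤ z := by
  set O := integralClosure ℤ ℂ
  set B : O := ⟨b, hb⟩
  set p : Polynomial O := iterQ n B h - C ((n : O) ^ (iterM n h)) * X with hp
  obtain ⟨hm, hd⟩ := iterQ_monic n (by omega) B h
  have hpm : p.Monic := by
    rw [hp, sub_eq_add_neg]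
    refine hm.add_of_left ?_
    rw [degree_neg, degree_eq_natDegree hm.ne_zero, hd]
    refine lt_of_le_of_lt (degree_C_mul_X_le _) ?_
    exact_mod_cast Nat.one_lt_pow (by omega) (by omega)
  have hroot : Polynomial.aeval z p = 0 := by
    rw [hp, map_sub, map_mul, aeval_C, aeval_X, aeval_iterQ n hn b hb z h, hz]
    have : (algebraMap O ℂ) ((n : O) ^ (iterM n h)) = (n : ℂ) ^ (iterM n h) := by
      push_cast [Subalgebra.algebraMap_eq]; rfl
    rw [this]; ring
  have hOz : IsIntegral O z := ⟨p, hpm, by rwa [← aeval_def]⟩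
  exact isIntegral_trans z hOz

theorem stmt11 (n : ℕ) (hn : 2 ≤ n) (b : ℂ) (hb : IsIntegral ℤ b)
    (g : ℂ → ℂ) (hg : g = fun z : ℂ => (z ^ n + b) / n)
    (w : ℂ) (h : ℕ) (hh : 1 ≤ h) (hper : g^[h] w = w)
    (μ : ℂ) (hμ : μ = ∏ j ∈ Finset.range h, (g^[j] w) ^ (n - 1)) :
    IsIntegral ℤ ((μ ^ n - (-b) ^ ((n - 1) * h)) / n) := by
  have hn0 : (n : ℂ) ≠ 0 := Nat.cast_ne_zero.2 (by omega)
  set O := integralClosure ℤ ℂ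
  set B : O := ⟨b, hb⟩ with hB
  -- each iterate of w is periodic, hence integral
  have hperiter : ∀ j : ℕ, g^[h] (g^[j] w) = g^[j] w := by
    intro j
    rw [← Function.iterate_add_apply, Nat.add_comm, Function.iterate_add_apply, hper]
  have hint : ∀ j : ℕ, IsIntegral ℤ (g^[j] w) := fun j =>
    periodic_isIntegral n hn b hb h hh (g^[j] w) (by rw [← hg]; exact hperiter j)
  set W : ℕ → O := fun j => ⟨g^[j] w, hint j⟩ with hW
  -- the basic recursion in O
  have hrec : ∀ j : ℕ, (W j) ^ n = -B + (n : O) * W (j + 1) := by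
    intro j
    apply Subtype.ext
    push_cast [hW, hB]
    have hgapp : g ((g^[j]) w) = (((g^[j]) w) ^ n + b) / n := by rw [hg]
    rw [Function.iterate_succ_apply', hgapp]
    field_simp
    ring
  -- the multiplier inside O
  set μ' : O := ∏ j ∈ Finset.range h, (W j) ^ (n - 1) with hμ'
  have hμcoe : (μ' : ℂ) = μ := by
    rw [hμ', hμ]
    push_cast [hW]
    rfl
  -- congruence mod n
  obtain ⟨t, ht⟩ : ∃ t : O, μ' ^ n = (-B) ^ ((n - 1) * h) + (n : O) * t := by
    have key : ∀ j < h, ∃ u : O, ((W j) ^ (n - 1)) ^ n = (-B) ^ (n - 1) + (n : O) * u := by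
      intro j _
      obtain ⟨u, hu⟩ := pow_mod_aux (-B) (W (j + 1)) (n : O) (n - 1)
      exact ⟨u, by rw [← pow_right_comm, hrec j, hu]⟩
    obtain ⟨t, ht⟩ := prod_mod_aux (n : O) ((-B) ^ (n - 1)) h
      (fun j => ((W j) ^ (n - 1)) ^ n) key
    refine ⟨t, ?_⟩
    rw [hμ', ← Finset.prod_pow, ht, ← pow_mul]
  -- transfer to ℂ
  have hcoe : μ ^ n - (-b) ^ ((n - 1) * h) = (n : ℂ) * (t : ℂ) := by
    have := congrArg (fun x : O => (x : ℂ)) ht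
    push_cast [hμcoe, hB] at this
    rw [this]; ring
  have : (μ ^ n - (-b) ^ ((n - 1) * h)) / n = (t : ℂ) := by
    rw [hcoe]; field_simp
  rw [this]
  exact t.2
end

section
/- Let n ≥ 2 be an integer, let b be an algebraic integer, and let w be a periodic point of g_b of period h ≥ 1 with multiplier μ = ∏_{j=0}^{h-1} (g_b^{∘j}(w))^{n-1} (so that w, μ, and b^{n-1} are also algebraic integers). If any one of the four numbers w, μ, b, b^{n-1} is prime to n, then all four of them are prime to n. -/
set_option maxHeartbeats 1000000
set_option synthInstance.maxHeartbeats 400000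


/-- An algebraic integer `x` is *prime to* `n` if `x·𝒪 + n·𝒪 = 𝒪`, i.e. there are
algebraic integers `s`, `t` with `x·s + n·t = 1`. -/
def PrimeTo (n : ℕ) (x : ℂ) : Prop :=
  ∃ s t : ℂ, IsIntegral ℤ s ∧ IsIntegral ℤ t ∧ x * s + (n : ℂ) * t = 1

open Polynomial in
private lemma myPowExpand (a c : ℂ) (ha : IsIntegral ℤ a) (hc : IsIntegral ℤ c) (n : ℕ) :
    ∃ k : ℂ, IsIntegral ℤ k ∧ (a + c) ^ n = a ^ n + c * k := by
  set A : integralClosure ℤ ℂ := ⟨a, ha⟩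
  set C' : integralClosure ℤ ℂ := ⟨c, hc⟩
  have hd : (A + C') - A ∣ (A + C') ^ n - A ^ n := sub_dvd_pow_sub_pow _ _ n
  rw [add_sub_cancel_left] at hd
  obtain ⟨K, hK⟩ := hd
  refine ⟨K, (mem_integralClosure_iff ℤ ℂ).mp K.2, ?_⟩
  have := congrArg (fun x : integralClosure ℤ ℂ => (x : ℂ)) hK
  simp only [A, C'] at this
  push_cast at this
  linear_combination this
  

private def myE (n : ℕ) : ℕ → ℕ
  | 0 => 0
  | j + 1 => n * myE n j + 1

open Polynomial in
private noncomputable def myQ (n : ℕ) (bR : integralClosure ℤ ℂ) :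
    ℕ → Polynomial (integralClosure ℤ ℂ)
  | 0 => X
  | j + 1 => myQ n bR j ^ n + C ((n : integralClosure ℤ ℂ) ^ (n * myE n j) * bR)

open Polynomial in
private lemma myQ_monic (n : ℕ) (hn : 2 ≤ n) (bR : integralClosure ℤ ℂ) :
    ∀ j, (myQ n bR j).Monic ∧ (myQ n bR j).natDegree = n ^ j := by
  intro j
  induction j with
  | zero => exact ⟨monic_X, natDegree_X⟩
  | succ j ih =>
    obtain ⟨hm, hd⟩ := ih
    have hpm : (myQ n bR j ^ n).Monic := hm.pow n
    have hpd : (myQ n bR j ^ n).natDegree = n ^ (j + 1) := by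
      rw [hm.natDegree_pow, hd, pow_succ, mul_comm]
    constructor
    · refine hpm.add_of_left ?_
      refine lt_of_le_of_lt degree_C_le ?_
      rw [degree_eq_natDegree hpm.ne_zero, hpd]
      exact_mod_cast pow_pos (by omega : 0 < n) (j + 1)
    · rw [myQ, natDegree_add_C, hpd]

open Polynomial in
private lemma myQ_eval (n : ℕ) (hn : 2 ≤ n) (b : ℂ) (hb : IsIntegral ℤ b)
    (g : ℂ → ℂ) (hg : g = fun z : ℂ => (z ^ n + b) / n) (z : ℂ) :
    ∀ j, Polynomial.aeval z (myQ n ⟨b, hb⟩ j) = (n : ℂ) ^ (myE n j) * g^[j] z := by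
  have hnz : (n : ℂ) ≠ 0 := by
    have : (0:ℕ) < n := by omega
    exact_mod_cast this.ne'
  intro j
  induction j with
  | zero => simp [myQ, myE]
  | succ j ih =>
    have key : g (g^[j] z) = ((g^[j] z) ^ n + b) / n := by rw [hg]
    rw [myQ, map_add, map_pow, ih, aeval_C, Function.iterate_succ_apply', key, myE]
    have hco : (algebraMap (integralClosure ℤ ℂ) ℂ)
        ((n : integralClosure ℤ ℂ) ^ (n * myE n j) * ⟨b, hb⟩) = (n : ℂ) ^ (n * myE n j) * b := by
      push_cast
      rfl
    rw [hco]
    set x := g^[j] z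
    have h1 : (n : ℂ) ^ (n * myE n j + 1) * ((x ^ n + b) / n)
        = (n : ℂ) ^ (n * myE n j) * (x ^ n + b) := by
      rw [pow_succ]
      field_simp
    have h2 : ((n : ℂ) ^ (myE n j) * x) ^ n = (n : ℂ) ^ (n * myE n j) * x ^ n := by
      rw [mul_pow, ← pow_mul, mul_comm (myE n j) n]
    rw [h1, h2]
    ring

open Polynomial in
private lemma myPeriodic_isIntegral (n : ℕ) (hn : 2 ≤ n) (b : ℂ) (hb : IsIntegral ℤ b)
    (g : ℂ → ℂ) (hg : g = fun z : ℂ => (z ^ n + b) / n)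
    (h : ℕ) (hh : 1 ≤ h) (z : ℂ) (hz : g^[h] z = z) : IsIntegral ℤ z := by
  set R := integralClosure ℤ ℂ
  obtain ⟨hm, hd⟩ := myQ_monic n hn ⟨b, hb⟩ h
  set P : Polynomial R := myQ n ⟨b, hb⟩ h - C ((n : R) ^ (myE n h)) * X with hP
  have hdlt : (C ((n : R) ^ (myE n h)) * X).degree < (myQ n (⟨b, hb⟩ : R) h).degree := by
    refine lt_of_le_of_lt (degree_C_mul_X_le _) ?_
    rw [degree_eq_natDegree hm.ne_zero, hd]
    have : 1 < n ^ h := by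
      calc 1 < n := by omega
      _ = n ^ 1 := (pow_one n).symm
      _ ≤ n ^ h := Nat.pow_le_pow_right (by omega) hh
    exact_mod_cast this
  have hPm : P.Monic := hm.sub_of_left hdlt
  have hPz : Polynomial.aeval z P = 0 := by
    rw [hP, map_sub, map_mul, aeval_C, aeval_X, myQ_eval n hn b hb g hg z h, hz]
    push_cast
    ring
  have hzR : IsIntegral R z := ⟨P, hPm, by rwa [← Polynomial.aeval_def]⟩
  exact isIntegral_trans z hzR

private lemma myPrimeTo_one (n : ℕ) : PrimeTo n 1 :=
  ⟨1, 0, isIntegral_one, isIntegral_zero, by simp⟩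

private lemma myPrimeTo_mul {n : ℕ} {x y : ℂ} (hy : IsIntegral ℤ y)
    (hx : PrimeTo n x) (hyp : PrimeTo n y) : PrimeTo n (x * y) := by
  obtain ⟨s, t, hs, ht, e1⟩ := hx
  obtain ⟨u, v, hu, hv, e2⟩ := hyp
  exact ⟨s * u, v + t * (y * u), hs.mul hu, hv.add (ht.mul (hy.mul hu)),
    by linear_combination y * u * e1 + e2⟩

private lemma myPrimeTo_pow {n : ℕ} {x : ℂ} (hx : IsIntegral ℤ x) (h : PrimeTo n x) :
    ∀ k : ℕ, PrimeTo n (x ^ k)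
  | 0 => by simpa using myPrimeTo_one n
  | k + 1 => by
    rw [pow_succ]
    exact myPrimeTo_mul hx (myPrimeTo_pow hx h k) h

private lemma myPrimeTo_of_mul_right {n : ℕ} {x y : ℂ} (hy : IsIntegral ℤ y)
    (h : PrimeTo n (x * y)) : PrimeTo n x := by
  obtain ⟨s, t, hs, ht, e⟩ := h
  exact ⟨y * s, t, hy.mul hs, ht, by linear_combination e⟩

private lemma myPrimeTo_prod {n : ℕ} (f : ℕ → ℂ) (m : ℕ)
    (hf : ∀ j, IsIntegral ℤ (f j)) (hp : ∀ j, PrimeTo n (f j)) :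
    PrimeTo n (∏ j ∈ Finset.range m, f j) := by
  induction m with
  | zero => simpa using myPrimeTo_one n
  | succ m ih =>
    rw [Finset.prod_range_succ]
    exact myPrimeTo_mul (hf m) ih (hp m)

theorem stmt12 (n : ℕ) (hn : 2 ≤ n) (b : ℂ) (hb : IsIntegral ℤ b)
    (g : ℂ → ℂ) (hg : g = fun z : ℂ => (z ^ n + b) / n)
    (w : ℂ) (h : ℕ) (hh : 1 ≤ h) (hper : g^[h] w = w)
    (μ : ℂ) (hμ : μ = ∏ j ∈ Finset.range h, (g^[j] w) ^ (n - 1))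
    (hone : PrimeTo n w ∨ PrimeTo n μ ∨ PrimeTo n b ∨ PrimeTo n (b ^ (n - 1))) :
    PrimeTo n w ∧ PrimeTo n μ ∧ PrimeTo n b ∧ PrimeTo n (b ^ (n - 1)) := by
  have hnz : (n : ℂ) ≠ 0 := by
    have : (0:ℕ) < n := by omega
    exact_mod_cast this.ne'
  -- every point on the orbit is periodic, hence an algebraic integer
  have hperj : ∀ j : ℕ, g^[h] (g^[j] w) = g^[j] w := by
    intro j
    rw [← Function.iterate_add_apply, Nat.add_comm, Function.iterate_add_apply, hper]
  have hint : ∀ j : ℕ, IsIntegral ℤ (g^[j] w) :=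
    fun j => myPeriodic_isIntegral n hn b hb g hg h hh _ (hperj j)
  have hintw : IsIntegral ℤ w := by simpa using hint 0
  -- the basic recursion
  have keyj : ∀ j : ℕ, (n : ℂ) * g^[j + 1] w = (g^[j] w) ^ n + b := by
    intro j
    rw [Function.iterate_succ_apply', hg]
    field_simp
  -- w prime ⇒ b prime
  have b_of_w : PrimeTo n w → PrimeTo n b := by
    rintro ⟨s, t, hs, ht, e⟩
    obtain ⟨k, hk, hek⟩ := myPowExpand (w * s) ((n : ℂ) * t)
      (hintw.mul hs) ((by simpa using isIntegral_algebraMap (R := ℤ) (A := ℂ) (x := (n:ℤ)) : IsIntegral ℤ ((n:ℕ):ℂ)).mul ht) n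
    have h4 : (w * s) ^ n + (n : ℂ) * t * k = 1 := by
      rw [← hek, e, one_pow]
    have h3 := keyj 0
    simp only [Function.iterate_zero_apply] at h3
    exact ⟨-(s ^ n), g^[1] w * s ^ n + t * k,
      (hs.pow n).neg, ((hint 1).mul (hs.pow n)).add (ht.mul hk),
      by linear_combination h4 + s ^ n * h3⟩
  -- b prime ⇒ every orbit point prime
  have orb_of_b : PrimeTo n b → ∀ j : ℕ, PrimeTo n (g^[j] w) := by
    rintro ⟨s, t, hs, ht, e⟩ j
    have h3 := keyj j
    have hpow : (g^[j] w) ^ n = (g^[j] w) * (g^[j] w) ^ (n - 1) := by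
      conv_lhs => rw [show n = (n - 1) + 1 by omega]
      rw [pow_succ']
    exact ⟨-((g^[j] w) ^ (n - 1) * s), g^[j + 1] w * s + t,
      (((hint j).pow _).mul hs).neg, ((hint (j + 1)).mul hs).add ht,
      by linear_combination s * h3 + e + s * hpow⟩
  have w_of_b : PrimeTo n b → PrimeTo n w := by
    intro hbp
    simpa using orb_of_b hbp 0
  -- b prime ⇒ μ prime
  have mu_of_b : PrimeTo n b → PrimeTo n μ := by
    intro hbp
    rw [hμ]
    exact myPrimeTo_prod _ h (fun j => (hint j).pow _)
      (fun j => myPrimeTo_pow (hint j) (orb_of_b hbp j) _)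
  -- μ prime ⇒ w prime
  have w_of_mu : PrimeTo n μ → PrimeTo n w := by
    intro hmp
    obtain ⟨m, rfl⟩ : ∃ m, h = m + 1 := ⟨h - 1, by omega⟩
    have hfac : μ = w * ((∏ j ∈ Finset.range m, (g^[j + 1] w) ^ (n - 1)) * w ^ (n - 2)) := by
      rw [hμ, Finset.prod_range_succ']
      simp only [Function.iterate_zero_apply]
      have hw : w ^ (n - 1) = w * w ^ (n - 2) := by
        conv_lhs => rw [show n - 1 = (n - 2) + 1 by omega]
        rw [pow_succ']
      rw [hw]; ring
    rw [hfac] at hmp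
    refine myPrimeTo_of_mul_right ?_ hmp
    exact (IsIntegral.prod _ (fun j _ => (hint (j + 1)).pow _)).mul (hintw.pow _)
  -- b^{n-1} prime ⇒ b prime
  have b_of_bn : PrimeTo n (b ^ (n - 1)) → PrimeTo n b := by
    intro hbn
    have hfac : b ^ (n - 1) = b * b ^ (n - 2) := by
      conv_lhs => rw [show n - 1 = (n - 2) + 1 by omega]
      rw [pow_succ']
    rw [hfac] at hbn
    exact myPrimeTo_of_mul_right (hb.pow _) hbn
  -- putting everything together
  have hbp : PrimeTo n b := by
    rcases hone with hw | hm | hb' | hbn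
    · exact b_of_w hw
    · exact b_of_w (w_of_mu hm)
    · exact hb'
    · exact b_of_bn hbn
  exact ⟨w_of_b hbp, mu_of_b hbp, hbp, myPrimeTo_pow hb hbp _⟩
end
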